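/- Let r ∈ {3,5}, let D be the dihedral group of order 2r, and let S ⊆ D with S = S⁻¹. Then there exists a nontrivial automorphism β of D with β(S) = S such that β inverts every element of the cyclic subgroup of order r of D. -/
import Mathlib

open DihedralGroup in
def dflip (n : ℕ) (b : ZMod n) : DihedralGroup n ≃* DihedralGroup n where
  toFun g := match g with
    | .r j => .r (-j)
    | .sr i => .sr (b - i)
  invFun g := match g with
    | .r j => .r (-j)
    | .sr i => .sr (b - i)
  left_inv g := by cases g <;> simp
  right_inv g := by cases g <;> simp
  map_mul' g h := by
    cases g <;> cases h <;> simp <;> ring_nf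

lemma refl3 : ∀ T : Finset (ZMod 3), ∃ b, ∀ i ∈ T, b - i ∈ T := by decide
lemma refl5 : ∀ T : Finset (ZMod 5), ∃ b, ∀ i ∈ T, b - i ∈ T := by decide

/-- for `r ∈ {3,5}` and any inverse-closed subset `S` of the dihedral group
of order `2r`, some nontrivial automorphism fixing `S` setwise inverts every element of
the cyclic subgroup of order `r`. -/
theorem stmt6 (n : ℕ) (hn : n = 3 ∨ n = 5) (S : Set (DihedralGroup n))
    (hS : S⁻¹ = S) :
    ∃ β : MulAut (DihedralGroup n), β ≠ 1 ∧ β '' S = S ∧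
      ∀ j : ZMod n, β (DihedralGroup.r j) = (DihedralGroup.r j)⁻¹ := by
  classical
  haveI : NeZero n := ⟨by rcases hn with h | h <;> subst h <;> decide⟩
  have hinv : ∀ j : ZMod n, (DihedralGroup.r j)⁻¹ = DihedralGroup.r (-j) := fun j => rfl
  have hrefl : ∀ T : Finset (ZMod n), ∃ b, ∀ i ∈ T, b - i ∈ T := by
    rcases hn with h | h <;> subst h
    · exact refl3
    · exact refl5
  obtain ⟨b, hb⟩ := hrefl (Finset.univ.filter (fun i => DihedralGroup.sr i ∈ S))
  refine ⟨dflip n b, ?_, ?_, ?_⟩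
  · intro h
    have h1 : dflip n b (DihedralGroup.r 1) = DihedralGroup.r 1 := by rw [h]; rfl
    have : (-1 : ZMod n) = 1 := by simpa [dflip] using h1
    rcases hn with h | h <;> subst h <;> revert this <;> decide
  · have hsub : ∀ x ∈ S, dflip n b x ∈ S := by
      rintro (⟨j⟩ | ⟨i⟩) hx
      · have : (DihedralGroup.r j)⁻¹ ∈ S⁻¹ := by simpa using hx
        rw [hS] at this
        rw [hinv] at this; simpa [dflip] using this
      · have := hb i (by simp [hx])
        simpa [dflip] using (Finset.mem_filter.mp this).2
    apply Set.Subset.antisymm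
    · rintro _ ⟨x, hx, rfl⟩; exact hsub x hx
    · intro x hx
      refine ⟨dflip n b x, hsub x hx, ?_⟩
      exact (dflip n b).apply_symm_apply x ▸ by
        cases x <;> simp [dflip]
  · intro j
    rw [hinv]; rfl
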